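/- arXiv:1704.05515 — 2 statements merged into one kernel-verified Lean document; each statement's English description precedes it below -/
import Mathlib

section
/- Quasirationality does not depend on the choice of presentation: if 1 → R → F → G → 1 and 1 → R' → F' → G → 1 are two presentations of the same group G, with F and F' free groups on finite sets and R, R' normal subgroups, then R/[R,F] is torsion-free if and only if R'/[R',F'] is torsion-free. -/
/-!
STATEMENT 3: Quasirationality does not depend on the choice of presentation:
given two finite-type presentations `1 → R → F → G → 1` and `1 → R' → F' → G → 1`
of the same group `G`, the group `R/[R,F]` is torsion-free iff `R'/[R',F']` is.
-/

/-- The subgroup `[ker π, F]` of the free group `F`. -/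
def relComm {X G : Type} [Group G] (π : FreeGroup X →* G) : Subgroup (FreeGroup X) :=
  ⁅π.ker, (⊤ : Subgroup (FreeGroup X))⁆

instance {X G : Type} [Group G] (π : FreeGroup X →* G) : (relComm π).Normal :=
  Subgroup.commutator_normal _ _

/-- `R/[R,F]`, realized as the image of `R = ker π` in `F/[R,F]`. -/
def relCoinv {X G : Type} [Group G] (π : FreeGroup X →* G) :
    Subgroup (FreeGroup X ⧸ relComm π) :=
  Subgroup.map (QuotientGroup.mk' (relComm π)) π.ker

/-- A monoid is torsion-free if no nontrivial element has finite order
(the meaning `Monoid.IsTorsionFree` had in the older Mathlib). -/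
def Monoid.IsTorsionFree (G : Type*) [Monoid G] : Prop :=
  ∀ g : G, g ≠ 1 → ¬IsOfFinOrder g

open scoped commutatorElement

section AuxLemmas

variable {X G : Type} [Group G] (π : FreeGroup X →* G)

lemma relComm_le_ker : relComm π ≤ π.ker :=
  Subgroup.commutator_le_left _ _

lemma relComm_le_commutator : relComm π ≤ commutator (FreeGroup X) :=
  Subgroup.commutator_mono le_top le_top

/-- The image of `ker π` in `F/[R,F]` is central. -/
lemma mk_ker_mem_center {r : FreeGroup X} (hr : r ∈ π.ker) :
    (QuotientGroup.mk r : FreeGroup X ⧸ relComm π) ∈ Subgroup.center _ := by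
  rw [Subgroup.mem_center_iff]
  intro q
  induction q using QuotientGroup.induction_on with
  | _ f =>
    show (QuotientGroup.mk (f * r) : FreeGroup X ⧸ relComm π) = QuotientGroup.mk (r * f)
    rw [QuotientGroup.eq]
    have h : (f * r)⁻¹ * (r * f) = ⁅r⁻¹, f⁻¹⁆ := by
      simp [commutatorElement_def]; group
    rw [h]
    exact Subgroup.commutator_mem_commutator (inv_mem hr) (Subgroup.mem_top _)

/-- Commutators are insensitive to central factors (left slot). -/
lemma commutatorElement_center_mul_left {Q : Type*} [Group Q] {z : Q}
    (hz : z ∈ Subgroup.center Q) (a b : Q) : ⁅z * a, b⁆ = ⁅a, b⁆ := by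
  have hz' := Subgroup.mem_center_iff.mp hz
  simp only [commutatorElement_def, mul_inv_rev]
  calc z * a * b * (a⁻¹ * z⁻¹) * b⁻¹
      = z * (a * b * a⁻¹) * z⁻¹ * b⁻¹ := by group
    _ = a * b * a⁻¹ * (z * z⁻¹) * b⁻¹ := by rw [← hz' (a * b * a⁻¹)]; group
    _ = a * b * a⁻¹ * b⁻¹ := by group

lemma commutatorElement_center_mul {Q : Type*} [Group Q] {z w : Q}
    (hz : z ∈ Subgroup.center Q) (hw : w ∈ Subgroup.center Q) (a b : Q) :
    ⁅z * a, w * b⁆ = ⁅a, b⁆ := by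
  rw [commutatorElement_center_mul_left hz, ← commutatorElement_inv,
    commutatorElement_center_mul_left hw, commutatorElement_inv]

/-- The abelianization of a free group is torsion-free. -/
lemma freeGroup_ab_torsionfree {a : Abelianization (FreeGroup X)} {n : ℕ}
    (hn : n ≠ 0) (h : a ^ n = 1) : a = 1 := by
  let e := FreeAbelianGroup.equivFinsupp X
  have h1 : (Additive.ofMul a : FreeAbelianGroup X) = 0 := by
    have h2 : (n : ℤ) • e (Additive.ofMul a) = 0 := by
      rw [natCast_zsmul]
      refine (map_nsmul e n (Additive.ofMul a : FreeAbelianGroup X)).symm.trans ?_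
      have : (n • Additive.ofMul a : FreeAbelianGroup X) = Additive.ofMul (a ^ n) := rfl
      rw [this, h]
      rfl
    have h3 := smul_eq_zero.mp h2
    rcases h3 with h3 | h3
    · exact absurd (Int.natCast_eq_zero.mp h3) hn
    · exact e.injective (h3.trans (map_zero e).symm)
  exact h1

/-- If a power of `r` lies in the commutator subgroup of a free group, so does `r`. -/
lemma mem_commutator_of_pow_mem {r : FreeGroup X} {n : ℕ} (hn : n ≠ 0)
    (h : r ^ n ∈ commutator (FreeGroup X)) : r ∈ commutator (FreeGroup X) := by
  have h1 : (Abelianization.of r) ^ n = 1 := by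
    show (QuotientGroup.mk r : FreeGroup X ⧸ commutator (FreeGroup X)) ^ n = 1
    rw [← QuotientGroup.mk_pow]
    exact (QuotientGroup.eq_one_iff _).mpr h
  have h2 : Abelianization.of r = 1 := freeGroup_ab_torsionfree hn h1
  exact (QuotientGroup.eq_one_iff _).mp h2

/-- The image of the commutator subgroup of `F` in `F/[R,F]` lies in the
commutator subgroup of the quotient. -/
lemma mk_mem_commutator {r : FreeGroup X} (hr : r ∈ commutator (FreeGroup X)) :
    (QuotientGroup.mk r : FreeGroup X ⧸ relComm π) ∈
      commutator (FreeGroup X ⧸ relComm π) := by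
  have h : Subgroup.map (QuotientGroup.mk' (relComm π)) (commutator (FreeGroup X)) ≤
      commutator (FreeGroup X ⧸ relComm π) := by
    rw [commutator_def, Subgroup.map_commutator, commutator_def]
    exact Subgroup.commutator_mono le_top le_top
  exact h ⟨r, hr, rfl⟩

/-- Key lemma: if `θ : F → F` satisfies `π ∘ θ = π` and maps `[R,F]` into itself,
then the induced endomorphism of `F/[R,F]` fixes the image of the commutator
subgroup pointwise. -/
lemma theta_fixes_commutator (θ : FreeGroup X →* FreeGroup X)
    (hθ : ∀ f, π (θ f) = π f) (hmap : ∀ x ∈ relComm π, θ x ∈ relComm π)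
    {r : FreeGroup X} (hr : r ∈ commutator (FreeGroup X)) :
    (QuotientGroup.mk (θ r) : FreeGroup X ⧸ relComm π) = QuotientGroup.mk r := by
  let θb : (FreeGroup X ⧸ relComm π) →* (FreeGroup X ⧸ relComm π) :=
    QuotientGroup.map _ _ θ (fun x hx => hmap x hx)
  have hmk : ∀ f : FreeGroup X, θb (QuotientGroup.mk f) = QuotientGroup.mk (θ f) :=
    fun f => rfl
  have key : commutator (FreeGroup X ⧸ relComm π) ≤ θb.eqLocus (MonoidHom.id _) := by
    rw [commutator_def, Subgroup.commutator_le]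
    intro a _ b _
    induction a using QuotientGroup.induction_on with
    | _ f =>
      induction b using QuotientGroup.induction_on with
      | _ g =>
        show θb ⁅(QuotientGroup.mk f : FreeGroup X ⧸ relComm π), QuotientGroup.mk g⁆ = _
        rw [map_commutatorElement, hmk, hmk]
        have hf : (QuotientGroup.mk (θ f) : FreeGroup X ⧸ relComm π) =
            QuotientGroup.mk (θ f * f⁻¹) * QuotientGroup.mk f := by
          rw [← QuotientGroup.mk_mul]; group
        have hg : (QuotientGroup.mk (θ g) : FreeGroup X ⧸ relComm π) =
            QuotientGroup.mk (θ g * g⁻¹) * QuotientGroup.mk g := by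
          rw [← QuotientGroup.mk_mul]; group
        have hfker : θ f * f⁻¹ ∈ π.ker := by
          rw [MonoidHom.mem_ker, map_mul, map_inv, hθ, mul_inv_cancel]
        have hgker : θ g * g⁻¹ ∈ π.ker := by
          rw [MonoidHom.mem_ker, map_mul, map_inv, hθ, mul_inv_cancel]
        rw [hf, hg, commutatorElement_center_mul (mk_ker_mem_center π hfker)
          (mk_ker_mem_center π hgker)]
        rfl
  have := key (mk_mem_commutator π hr)
  have h2 : θb (QuotientGroup.mk r) = QuotientGroup.mk r := this
  rw [hmk] at h2
  exact h2

end AuxLemmas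

/-- The transfer lemma: torsion-freeness of `R'/[R',F']` implies that of `R/[R,F]`. -/
lemma torsionfree_transfer {X X' G : Type} [Group G]
    (π : FreeGroup X →* G) (π' : FreeGroup X' →* G)
    (hπ : Function.Surjective π) (hπ' : Function.Surjective π')
    (h' : Monoid.IsTorsionFree ↥(relCoinv π')) : Monoid.IsTorsionFree ↥(relCoinv π) := by
  classical
  choose s hs using hπ'
  choose t ht using hπ
  let φ : FreeGroup X →* FreeGroup X' := FreeGroup.lift (fun x => s (π (FreeGroup.of x)))
  let ψ : FreeGroup X' →* FreeGroup X := FreeGroup.lift (fun x => t (π' (FreeGroup.of x)))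
  have hφ : ∀ f, π' (φ f) = π f := by
    have : π'.comp φ = π :=
      FreeGroup.ext_hom _ _ (fun x => by simp [φ, FreeGroup.lift_apply_of, hs])
    intro f; rw [← this]; rfl
  have hψ : ∀ f, π (ψ f) = π' f := by
    have : π.comp ψ = π' :=
      FreeGroup.ext_hom _ _ (fun x => by simp [ψ, FreeGroup.lift_apply_of, ht])
    intro f; rw [← this]; rfl
  have hφker : ∀ r ∈ π.ker, φ r ∈ π'.ker := fun r hr => by
    rw [MonoidHom.mem_ker, hφ]; exact hr
  have hψker : ∀ r ∈ π'.ker, ψ r ∈ π.ker := fun r hr => by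
    rw [MonoidHom.mem_ker, hψ]; exact hr
  have hφrel : ∀ r ∈ relComm π, φ r ∈ relComm π' := by
    intro r hr
    have h : Subgroup.map φ (relComm π) ≤ relComm π' := by
      rw [relComm, Subgroup.map_commutator, relComm]
      refine Subgroup.commutator_mono ?_ le_top
      rintro y ⟨x, hx, rfl⟩
      exact hφker x hx
    exact h ⟨r, hr, rfl⟩
  have hψrel : ∀ r ∈ relComm π', ψ r ∈ relComm π := by
    intro r hr
    have h : Subgroup.map ψ (relComm π') ≤ relComm π := by
      rw [relComm, Subgroup.map_commutator, relComm]
      refine Subgroup.commutator_mono ?_ le_top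
      rintro y ⟨x, hx, rfl⟩
      exact hψker x hx
    exact h ⟨r, hr, rfl⟩
  -- the composite lift θ = ψ ∘ φ
  intro g hg hfin
  obtain ⟨n, hn, hgn⟩ := isOfFinOrder_iff_pow_eq_one.mp hfin
  obtain ⟨r, hrker, hrg⟩ := g.2
  -- (mk r)^n = 1 in F/[R,F]
  have hcoe : ((g : FreeGroup X ⧸ relComm π)) ^ n = 1 := by
    have := congrArg (Subtype.val) hgn
    simpa using this
  have hrpow : r ^ n ∈ relComm π := by
    rw [← hrg] at hcoe
    have : (QuotientGroup.mk (r ^ n) : FreeGroup X ⧸ relComm π) = 1 := by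
      rw [QuotientGroup.mk_pow]
      exact hcoe
    exact (QuotientGroup.eq_one_iff _).mp this
  -- r lies in the commutator subgroup of F
  have hrcomm : r ∈ commutator (FreeGroup X) :=
    mem_commutator_of_pow_mem hn.ne' (relComm_le_commutator π hrpow)
  -- the image of r in F'/[R',F'] is torsion, hence trivial
  have hYmem : (QuotientGroup.mk (φ r) : FreeGroup X' ⧸ relComm π') ∈ relCoinv π' :=
    ⟨φ r, hφker r hrker, rfl⟩
  set Y : ↥(relCoinv π') := ⟨QuotientGroup.mk (φ r), hYmem⟩ with hYdef
  have hYn : Y ^ n = 1 := by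
    apply Subtype.ext
    show ((QuotientGroup.mk (φ r) : FreeGroup X' ⧸ relComm π')) ^ n = 1
    rw [← QuotientGroup.mk_pow, ← map_pow]
    exact (QuotientGroup.eq_one_iff _).mpr (hφrel _ hrpow)
  have hY1 : Y = 1 := by
    by_contra hY
    exact h' Y hY (isOfFinOrder_iff_pow_eq_one.mpr ⟨n, hn, hYn⟩)
  have hφr : φ r ∈ relComm π' := by
    have : (QuotientGroup.mk (φ r) : FreeGroup X' ⧸ relComm π') = 1 :=
      congrArg Subtype.val hY1
    exact (QuotientGroup.eq_one_iff _).mp this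
  -- hence ψ(φ r) ∈ [R,F], so mk (θ r) = 1, but θ fixes mk r
  have hθr1 : (QuotientGroup.mk ((ψ.comp φ) r) : FreeGroup X ⧸ relComm π) = 1 :=
    (QuotientGroup.eq_one_iff _).mpr (hψrel _ hφr)
  have hfix : (QuotientGroup.mk ((ψ.comp φ) r) : FreeGroup X ⧸ relComm π) =
      QuotientGroup.mk r := by
    refine theta_fixes_commutator π (ψ.comp φ) (fun f => ?_) (fun x hx => ?_) hrcomm
    · show π (ψ (φ f)) = π f
      rw [hψ, hφ]
    · exact hψrel _ (hφrel _ hx)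
  have : (g : FreeGroup X ⧸ relComm π) = 1 := by
    rw [← hrg]
    show (QuotientGroup.mk r : FreeGroup X ⧸ relComm π) = 1
    rw [← hfix, hθr1]
  exact hg (Subtype.ext this)

theorem quasirationality_independent_of_presentation
    {X X' G : Type} [Finite X] [Finite X'] [Group G]
    (π : FreeGroup X →* G) (π' : FreeGroup X' →* G)
    (hπ : Function.Surjective π) (hπ' : Function.Surjective π') :
    Monoid.IsTorsionFree ↥(relCoinv π) ↔ Monoid.IsTorsionFree ↥(relCoinv π') := by
  constructor
  · exact fun h => torsionfree_transfer π' π hπ' hπ h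
  · exact fun h => torsionfree_transfer π π' hπ hπ' h
end

section
/- Let 1 → R → F → G → 1 be a presentation of a group G with F a free group on a finite set X and R a normal subgroup. Then there is an exact sequence of abelian groups 0 → H₂(G, ℤ) → R/[R,F] → ℤ^{X} → G^{ab} → 0, where the map R/[R,F] → ℤ^{X} is induced by the inclusion R → F followed by the abelianization F → F/[F,F] ≅ ℤ^{X}, and ℤ^{X} → G^{ab} is induced by the projection F → G. -/
/-- `(R ∩ [F,F])/[R,F] ⊆ F/[R,F]`; by Hopf's formula this is `H₂(G, ℤ)`. -/
def hopfSub {X G : Type} [Group G] (π : FreeGroup X →* G) :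
    Subgroup (FreeGroup X ⧸ relComm π) :=
  Subgroup.map (QuotientGroup.mk' (relComm π)) (π.ker ⊓ commutator (FreeGroup X))

/-- The kernel of the canonical presentation `FreeGroup G → G`. -/
def hopfKer (G : Type) [Group G] : Subgroup (FreeGroup G) :=
  (FreeGroup.lift (id : G → G)).ker

/-- `H₂(G, ℤ)` via Hopf's formula, for the canonical presentation `FreeGroup G → G`. -/
def H2Z (G : Type) [Group G] :
    Subgroup (FreeGroup G ⧸ relComm (FreeGroup.lift (id : G → G))) :=
  Subgroup.map (QuotientGroup.mk' (relComm (FreeGroup.lift (id : G → G))))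
    (hopfKer G ⊓ commutator (FreeGroup G))

/-- The abelianization `F → ℤ^X` of the free group, `x ↦ e_x`. -/
noncomputable def abF {X : Type} : FreeGroup X →* Multiplicative (X →₀ ℤ) :=
  FreeGroup.lift fun x => Multiplicative.ofAdd (Finsupp.single x 1)

theorem relComm_le_ker_abF {X G : Type} [Group G] (π : FreeGroup X →* G) :
    relComm π ≤ (abF (X := X)).ker :=
  le_trans (Subgroup.commutator_mono le_top le_top)
    (Abelianization.commutator_subset_ker abF)

/-- The induced map `F/[R,F] → ℤ^X`. -/
noncomputable def abQ {X G : Type} [Group G] (π : FreeGroup X →* G) :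
    (FreeGroup X ⧸ relComm π) →* Multiplicative (X →₀ ℤ) :=
  QuotientGroup.lift (relComm π) abF (relComm_le_ker_abF π)

/-- The map `ℤ^X → Gᵃᵇ` induced by `π`, sending `e_x` to the class of `π x`. -/
noncomputable def augAb {X G : Type} [Group G] (π : FreeGroup X →* G) :
    (X →₀ ℤ) →+ Additive (Abelianization G) :=
  Finsupp.liftAddHom fun x =>
    zmultiplesHom _ (Additive.ofMul (Abelianization.of (π (FreeGroup.of x))))

section Aux
variable {X Y G : Type} [Group G]
open scoped commutatorElement

lemma mk_relComm_comm (π : FreeGroup X →* G) {r : FreeGroup X} (hr : r ∈ π.ker)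
    (q : FreeGroup X ⧸ relComm π) :
    (QuotientGroup.mk r : FreeGroup X ⧸ relComm π) * q = q * QuotientGroup.mk r := by
  induction q using QuotientGroup.induction_on with
  | _ f =>
    have h : ⁅r, f⁆ ∈ relComm π :=
      Subgroup.commutator_mem_commutator hr (Subgroup.mem_top f)
    have h1 : ⁅(QuotientGroup.mk r : FreeGroup X ⧸ relComm π), (QuotientGroup.mk f : FreeGroup X ⧸ relComm π)⁆ = 1 := by
      rw [show (QuotientGroup.mk r : FreeGroup X ⧸ relComm π) =
        QuotientGroup.mk' (relComm π) r from rfl,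
        show (QuotientGroup.mk f : FreeGroup X ⧸ relComm π) =
        QuotientGroup.mk' (relComm π) f from rfl, ← map_commutatorElement]
      exact (QuotientGroup.eq_one_iff _).mpr h
    exact (commutatorElement_eq_one_iff_commute.mp h1)

noncomputable def diffHom (π₂ : FreeGroup Y →* G) (α β : FreeGroup X →* FreeGroup Y)
    (h : ∀ w, π₂ (α w) = π₂ (β w)) : FreeGroup X →* (FreeGroup Y ⧸ relComm π₂) where
  toFun w := QuotientGroup.mk (α w) * (QuotientGroup.mk (β w))⁻¹
  map_one' := by simp
  map_mul' v w := by
    have hker : α w * (β w)⁻¹ ∈ π₂.ker := by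
      simp [MonoidHom.mem_ker, h w]
    have hc := mk_relComm_comm π₂ hker
    simp only [map_mul, QuotientGroup.mk_mul, mul_inv_rev]
    have hc' : ∀ q, (QuotientGroup.mk (α w) : FreeGroup Y ⧸ relComm π₂) *
        (QuotientGroup.mk (β w))⁻¹ * q =
        q * (QuotientGroup.mk (α w) * (QuotientGroup.mk (β w))⁻¹) := by
      intro q
      have := hc q
      simpa [QuotientGroup.mk_mul, QuotientGroup.mk_inv, mul_assoc] using this
    calc QuotientGroup.mk (α v) * QuotientGroup.mk (α w) *
          ((QuotientGroup.mk (β w))⁻¹ * (QuotientGroup.mk (β v))⁻¹)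
        = QuotientGroup.mk (α v) * (QuotientGroup.mk (α w) *
          (QuotientGroup.mk (β w))⁻¹ * (QuotientGroup.mk (β v))⁻¹) := by
          simp [mul_assoc]
      _ = QuotientGroup.mk (α v) * ((QuotientGroup.mk (β v))⁻¹ *
          (QuotientGroup.mk (α w) * (QuotientGroup.mk (β w))⁻¹)) := by
          rw [hc' ((QuotientGroup.mk (β v))⁻¹)]
      _ = QuotientGroup.mk (α v) * (QuotientGroup.mk (β v))⁻¹ *
          (QuotientGroup.mk (α w) * (QuotientGroup.mk (β w))⁻¹) := by
          simp [mul_assoc]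

lemma diff_eq_on_commutator (π₂ : FreeGroup Y →* G) (α β : FreeGroup X →* FreeGroup Y)
    (h : ∀ w, π₂ (α w) = π₂ (β w)) {w : FreeGroup X} (hw : w ∈ commutator (FreeGroup X)) :
    (QuotientGroup.mk (α w) : FreeGroup Y ⧸ relComm π₂) = QuotientGroup.mk (β w) := by
  set d := diffHom π₂ α β h with hd
  have hcentral : ∀ u (q : FreeGroup Y ⧸ relComm π₂), d u * q = q * d u := by
    intro u q
    have hker : α u * (β u)⁻¹ ∈ π₂.ker := by simp [MonoidHom.mem_ker, h u]
    have := mk_relComm_comm π₂ hker q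
    simpa [hd, diffHom, QuotientGroup.mk_mul, QuotientGroup.mk_inv] using this
  have hkerle : commutator (FreeGroup X) ≤ d.ker := by
    rw [commutator_def, Subgroup.commutator_le]
    intro g₁ _ g₂ _
    rw [MonoidHom.mem_ker, map_commutatorElement]
    exact commutatorElement_eq_one_iff_commute.mpr (hcentral g₁ (d g₂))
  have : d w = 1 := hkerle hw
  have : (QuotientGroup.mk (α w) : FreeGroup Y ⧸ relComm π₂) *
      (QuotientGroup.mk (β w))⁻¹ = 1 := this
  rw [mul_inv_eq_one] at this
  exact this

end Aux

section Bar
variable {X Y G : Type} [Group G]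
open scoped commutatorElement

lemma relComm_le_comap (π₁ : FreeGroup X →* G) (π₂ : FreeGroup Y →* G)
    (α : FreeGroup X →* FreeGroup Y) (hα : ∀ w, π₂ (α w) = π₁ w) :
    relComm π₁ ≤ (relComm π₂).comap α := by
  rw [relComm, Subgroup.commutator_le]
  intro r hr f _
  rw [Subgroup.mem_comap, map_commutatorElement]
  exact Subgroup.commutator_mem_commutator
    (by simp [MonoidHom.mem_ker, hα r, show π₁ r = 1 from hr]) (Subgroup.mem_top _)

noncomputable def liftBar (π₁ : FreeGroup X →* G) (π₂ : FreeGroup Y →* G)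
    (α : FreeGroup X →* FreeGroup Y) (hα : ∀ w, π₂ (α w) = π₁ w) :
    (FreeGroup X ⧸ relComm π₁) →* (FreeGroup Y ⧸ relComm π₂) :=
  QuotientGroup.map _ _ α (relComm_le_comap π₁ π₂ α hα)

lemma liftBar_mk (π₁ : FreeGroup X →* G) (π₂ : FreeGroup Y →* G)
    (α : FreeGroup X →* FreeGroup Y) (hα : ∀ w, π₂ (α w) = π₁ w) (w : FreeGroup X) :
    liftBar π₁ π₂ α hα (QuotientGroup.mk w) = QuotientGroup.mk (α w) := by
  rfl

lemma map_commutator_le (α : FreeGroup X →* FreeGroup Y) {w : FreeGroup X}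
    (hw : w ∈ commutator (FreeGroup X)) : α w ∈ commutator (FreeGroup Y) := by
  have : Subgroup.map α (commutator (FreeGroup X)) ≤ commutator (FreeGroup Y) := by
    rw [commutator_def, Subgroup.map_commutator]
    exact Subgroup.commutator_mono le_top le_top
  exact this ⟨w, hw, rfl⟩

lemma liftBar_mem_hopfSub (π₁ : FreeGroup X →* G) (π₂ : FreeGroup Y →* G)
    (α : FreeGroup X →* FreeGroup Y) (hα : ∀ w, π₂ (α w) = π₁ w)
    {q : FreeGroup X ⧸ relComm π₁} (hq : q ∈ hopfSub π₁) :
    liftBar π₁ π₂ α hα q ∈ hopfSub π₂ := by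
  obtain ⟨w, ⟨hw1, hw2⟩, rfl⟩ := hq
  refine ⟨α w, ⟨?_, map_commutator_le α hw2⟩, rfl⟩
  simp [MonoidHom.mem_ker, hα w, show π₁ w = 1 from hw1]

noncomputable def hopfEquiv (π₁ : FreeGroup X →* G) (π₂ : FreeGroup Y →* G)
    (α : FreeGroup X →* FreeGroup Y) (hα : ∀ w, π₂ (α w) = π₁ w)
    (β : FreeGroup Y →* FreeGroup X) (hβ : ∀ w, π₁ (β w) = π₂ w) :
    (hopfSub π₁) ≃* (hopfSub π₂) where
  toFun q := ⟨liftBar π₁ π₂ α hα q.1, liftBar_mem_hopfSub π₁ π₂ α hα q.2⟩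
  invFun q := ⟨liftBar π₂ π₁ β hβ q.1, liftBar_mem_hopfSub π₂ π₁ β hβ q.2⟩
  left_inv := by
    rintro ⟨q, hq⟩
    obtain ⟨w, ⟨hw1, hw2⟩, rfl⟩ := hq
    refine Subtype.ext ?_
    show liftBar π₂ π₁ β hβ (liftBar π₁ π₂ α hα (QuotientGroup.mk w)) = QuotientGroup.mk w
    rw [liftBar_mk, liftBar_mk]
    exact diff_eq_on_commutator π₁ (β.comp α) (MonoidHom.id _)
      (fun v => by simp [hβ, hα]) hw2
  right_inv := by
    rintro ⟨q, hq⟩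
    obtain ⟨w, ⟨hw1, hw2⟩, rfl⟩ := hq
    refine Subtype.ext ?_
    show liftBar π₁ π₂ α hα (liftBar π₂ π₁ β hβ (QuotientGroup.mk w)) = QuotientGroup.mk w
    rw [liftBar_mk, liftBar_mk]
    exact diff_eq_on_commutator π₂ (α.comp β) (MonoidHom.id _)
      (fun v => by simp [hβ, hα]) hw2
  map_mul' q r := by
    refine Subtype.ext ?_
    exact map_mul (liftBar π₁ π₂ α hα) q.1 r.1

end Bar

section AbF
variable {X G : Type} [Group G]

lemma augAb_abF (π : FreeGroup X →* G) (w : FreeGroup X) :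
    augAb π (Multiplicative.toAdd (abF w)) =
      Additive.ofMul (Abelianization.of (π w)) := by
  have key : (AddMonoidHom.toMultiplicativeLeft (augAb π)).comp abF =
      (Abelianization.of).comp π := by
    apply FreeGroup.ext_hom
    intro x
    simp [abF, augAb, FreeGroup.lift_apply_of, AddMonoidHom.coe_toMultiplicativeLeft,
      Finsupp.liftAddHom_apply_single]
  have := DFunLike.congr_fun key w
  simp only [MonoidHom.comp_apply, AddMonoidHom.coe_toMultiplicativeLeft,
    Function.comp_apply] at this
  rw [← this]
  rfl

lemma abF_ker (w : FreeGroup X) (hw : abF w = 1) : w ∈ commutator (FreeGroup X) := by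
  have := augAb_abF (MonoidHom.id (FreeGroup X)) w
  rw [hw] at this
  simp only [toAdd_one, map_zero, MonoidHom.id_apply] at this
  have h1 : Abelianization.of w = 1 := by
    have := congrArg Additive.toMul this.symm
    simpa using this
  exact (QuotientGroup.eq_one_iff _).mp h1

lemma abF_surj (v : X →₀ ℤ) : ∃ w : FreeGroup X, abF w = Multiplicative.ofAdd v := by
  induction v using Finsupp.induction with
  | zero => exact ⟨1, by simp⟩
  | single_add a b f _ _ ih =>
    obtain ⟨w, hw⟩ := ih
    refine ⟨(FreeGroup.of a) ^ b * w, ?_⟩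
    rw [map_mul, map_zpow, hw]
    have h : abF (FreeGroup.of a) = Multiplicative.ofAdd (Finsupp.single a (1 : ℤ)) :=
      FreeGroup.lift_apply_of
    rw [h, ← ofAdd_zsmul, Finsupp.smul_single, smul_eq_mul, mul_one, ← ofAdd_add]

end AbF

theorem crowell_lyndon_exact_sequence
    {X G : Type} [Finite X] [Group G] (π : FreeGroup X →* G)
    (hπ : Function.Surjective π) :
    -- `H₂(G,ℤ) = (R ∩ [F,F])/[R,F]` includes into `R/[R,F]` …
    hopfSub π ≤ relCoinv π ∧
    Nonempty (↥(hopfSub π) ≃* ↥(H2Z G)) ∧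
    -- … exactness at `R/[R,F]` …
    (∀ q ∈ relCoinv π, (abQ π q = 1 ↔ q ∈ hopfSub π)) ∧
    -- … exactness at `ℤ^X` …
    (∀ v : X →₀ ℤ,
      ((∃ q ∈ relCoinv π, abQ π q = Multiplicative.ofAdd v) ↔ augAb π v = 0)) ∧
    -- … and surjectivity onto `Gᵃᵇ`.
    Function.Surjective (augAb π) := by
  classical
  refine ⟨Subgroup.map_mono inf_le_left, ?_, ?_, ?_, ?_⟩
  · -- Hopf-formula comparison of presentations
    let φ : FreeGroup X →* FreeGroup G :=
      FreeGroup.lift fun x => FreeGroup.of (π (FreeGroup.of x))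
    let ψ : FreeGroup G →* FreeGroup X :=
      FreeGroup.lift fun g => Function.surjInv hπ g
    have hφ : ∀ w, (FreeGroup.lift (id : G → G)) (φ w) = π w := by
      intro w
      have h : (FreeGroup.lift (id : G → G)).comp φ = π :=
        FreeGroup.ext_hom _ _ (fun x => by simp [φ, FreeGroup.lift_apply_of])
      exact DFunLike.congr_fun h w
    have hψ : ∀ w, π (ψ w) = (FreeGroup.lift (id : G → G)) w := by
      intro w
      have h : π.comp ψ = FreeGroup.lift (id : G → G) :=
        FreeGroup.ext_hom _ _ (fun g => by
          simp [ψ, FreeGroup.lift_apply_of, Function.surjInv_eq hπ])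
      exact DFunLike.congr_fun h w
    exact ⟨hopfEquiv π (FreeGroup.lift (id : G → G)) φ hφ ψ hψ⟩
  · rintro q ⟨r, hr, rfl⟩
    constructor
    · intro h1
      have h2 : abF r = 1 := h1
      exact ⟨r, ⟨hr, abF_ker r h2⟩, rfl⟩
    · rintro ⟨s, ⟨hs1, hs2⟩, hmk⟩
      rw [← hmk]
      show abF s = 1
      exact Abelianization.commutator_subset_ker abF hs2
  · intro v
    constructor
    · rintro ⟨q, ⟨r, hr, rfl⟩, habq⟩
      have h1 : abF r = Multiplicative.ofAdd v := habq
      have h2 := augAb_abF π r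
      rw [h1] at h2
      simp only [toAdd_ofAdd] at h2
      rw [h2, show π r = 1 from hr]
      simp
    · intro hv
      obtain ⟨w, hw⟩ := abF_surj (X := X) v
      have h2 := augAb_abF π w
      rw [hw] at h2
      simp only [toAdd_ofAdd] at h2
      rw [hv] at h2
      have h3 : Abelianization.of (π w) = 1 := by
        have h4 := congrArg Additive.toMul h2.symm
        simpa using h4
      have h4 : π w ∈ commutator G := (QuotientGroup.eq_one_iff _).mp h3
      have h5 : π w ∈ Subgroup.map π (commutator (FreeGroup X)) := by
        rw [commutator_def, Subgroup.map_commutator, Subgroup.map_top_of_surjective π hπ]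
        exact h4
      obtain ⟨c, hc, hc2⟩ := h5
      refine ⟨QuotientGroup.mk' (relComm π) (w * c⁻¹), ⟨w * c⁻¹, ?_, rfl⟩, ?_⟩
      · show π (w * c⁻¹) = 1
        rw [map_mul, map_inv, hc2, mul_inv_cancel]
      · show abF (w * c⁻¹) = Multiplicative.ofAdd v
        rw [map_mul, map_inv, Abelianization.commutator_subset_ker abF hc, inv_one,
          mul_one, hw]
  · intro a
    obtain ⟨g, hg⟩ := QuotientGroup.mk_surjective (Additive.toMul a)
    obtain ⟨w, hw⟩ := hπ g
    refine ⟨Multiplicative.toAdd (abF w), ?_⟩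
    rw [augAb_abF π w, hw]
    have h6 : Abelianization.of g = Additive.toMul a := hg
    rw [h6]
    simp
end
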